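/- Let K be an Artinian commutative ring, C an infinite cyclic group, and M a K[C]-module that is finitely generated as a K-module. Let I be the augmentation ideal of K[C]. Then C acts nilpotently on the I-adic completion M̂_I, the natural map M → M̂_I is a split surjection of C-modules, and there is a natural direct sum decomposition M = MI^∞ ⊕ M̂_I where MI^∞ = ∩_{i≥1} MI^i. -/

import Mathlib

open MonoidAlgebra

/-- The infinite cyclic group. -/
abbrev C : Type := Multiplicative ℤ

/-- The augmentation ideal `I = Ker(K[C] → K)` of the group ring of the infinite
cyclic group. -/
noncomputable def augIdeal (K : Type) [CommRing K] : Ideal (MonoidAlgebra K C) :=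
  RingHom.ker ((MonoidAlgebra.lift K K C) 1).toRingHom

/-! ### Auxiliary results: Hopkins–Levitzki style facts -/

section Hopkins

variable {K : Type*} [CommRing K]

/-- Transfer Noetherianity over a quotient ring back to the base ring. -/
lemma aux_isNoetherian_of_quotient (N : Ideal K) (S : Type*) [AddCommGroup S] [Module K S]
    (hS : Module.IsTorsionBySet K S N)
    (h : letI := hS.module; IsNoetherian (K ⧸ N) S) : IsNoetherian K S := by
  letI := hS.module
  haveI : IsScalarTower K (K ⧸ N) S := hS.isScalarTower
  rw [isNoetherian_iff'] at h ⊢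
  let t : Submodule K S → Submodule (K ⧸ N) S := fun p =>
    { carrier := p
      add_mem' := fun ha hb => p.add_mem ha hb
      zero_mem' := p.zero_mem
      smul_mem' := by
        rintro c x hx
        obtain ⟨a, rfl⟩ := Ideal.Quotient.mk_surjective c
        rw [← Ideal.Quotient.algebraMap_eq, algebraMap_smul]
        exact p.smul_mem a hx }
  have ht : StrictMono t := fun p q hpq => by
    refine lt_of_le_not_ge (fun x hx => hpq.le hx) (fun hcon => hpq.not_ge (fun x hx => hcon hx))
  exact ht.wellFoundedGT

/-- A finitely generated module over an Artinian commutative ring is Noetherian. -/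
lemma aux_isNoetherian_of_finite_artinian [IsArtinianRing K]
    (M : Type*) [AddCommGroup M] [Module K M] [Module.Finite K M] : IsNoetherian K M := by
  obtain ⟨k, hk⟩ := IsArtinianRing.isNilpotent_jacobson_bot (R := K)
  set N : Ideal K := Ideal.jacobson ⊥ with hNdef
  haveI : IsReduced (K ⧸ N) :=
    (Ideal.isRadical_iff_quotient_reduced N).mp (Ideal.isRadical_jacobson ⊥)
  haveI : IsSemisimpleRing (K ⧸ N) := IsArtinianRing.isSemisimpleRing_of_isReduced (K ⧸ N)
  haveI : IsArtinian K M := isArtinian_of_fg_of_artinian'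
  have key : ∀ i : ℕ, IsNoetherian K (M ⧸ (N ^ i • ⊤ : Submodule K M)) := by
    intro i
    induction i with
    | zero =>
      haveI : Subsingleton (M ⧸ (N ^ 0 • ⊤ : Submodule K M)) := by
        rw [Submodule.Quotient.subsingleton_iff, pow_zero, Ideal.one_eq_top,
          Submodule.top_smul]
      exact isNoetherian_of_finite K _
    | succ i ih =>
      set A := (N ^ i • ⊤ : Submodule K M) with hA
      set B := (N ^ (i + 1) • ⊤ : Submodule K M) with hB
      have hBA : B ≤ A := by
        rw [hA, hB, pow_succ, ← Ideal.smul_eq_mul, Submodule.smul_assoc]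
        exact Submodule.smul_mono le_rfl (Submodule.smul_le.mpr fun r _ m _ =>
          Submodule.smul_mem _ _ trivial)
      let g : (M ⧸ B) →ₗ[K] (M ⧸ A) := Submodule.mapQ B A LinearMap.id hBA
      have hgmk : ∀ m : M, g (Submodule.Quotient.mk m) = Submodule.Quotient.mk m := fun m =>
        Submodule.mapQ_apply _ _ _ m
      -- the kernel of `g` is killed by `N`
      have hts : Module.IsTorsionBySet K (LinearMap.ker g) (N : Set K) := by
        rintro ⟨x, hx⟩ ⟨a, ha⟩
        obtain ⟨m, rfl⟩ := Submodule.Quotient.mk_surjective B x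
        have hmA : m ∈ A := by
          rw [LinearMap.mem_ker, hgmk, Submodule.Quotient.mk_eq_zero] at hx
          exact hx
        have hB' : a • m ∈ B := by
          rw [hB, pow_succ', ← Ideal.smul_eq_mul, Submodule.smul_assoc]
          exact Submodule.smul_mem_smul ha hmA
        apply Subtype.ext
        show a • (Submodule.Quotient.mk m : M ⧸ B) = 0
        rw [← Submodule.Quotient.mk_smul, Submodule.Quotient.mk_eq_zero]
        exact hB'
      letI := hts.module
      haveI : IsScalarTower K (K ⧸ N) (LinearMap.ker g) := hts.isScalarTower
      haveI : IsArtinian (K ⧸ N) (LinearMap.ker g) := isArtinian_of_tower K inferInstance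
      have hart : IsArtinian (K ⧸ N) ↥(LinearMap.ker g) := inferInstance
      haveI hNoeQ : IsNoetherian (K ⧸ N) (LinearMap.ker g) :=
        ((IsSemisimpleModule.finite_tfae (R := K ⧸ N) (M := ↥(LinearMap.ker g))).out 2 1).mp hart
      haveI : IsNoetherian K (LinearMap.ker g) :=
        aux_isNoetherian_of_quotient N _ hts hNoeQ
      haveI : IsNoetherian K (M ⧸ A) := ih
      refine isNoetherian_of_range_eq_ker (LinearMap.ker g).subtype g (Submodule.range_subtype _)
  have hk' : (N ^ k • ⊤ : Submodule K M) = ⊥ := by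
    rw [hk, Submodule.zero_eq_bot, Submodule.bot_smul]
  haveI := key k
  rw [hk'] at this
  exact isNoetherian_of_linearEquiv (Submodule.quotEquivOfEqBot (⊥ : Submodule K M) rfl)

end Hopkins

/-! ### The augmentation ideal is generated by `t - 1` -/

section AugIdeal

variable (K : Type) [CommRing K]

/-- The augmentation map. -/
noncomputable def aug : MonoidAlgebra K C →ₐ[K] K := (MonoidAlgebra.lift K K C) 1

lemma mem_augIdeal_iff (f : MonoidAlgebra K C) : f ∈ augIdeal K ↔ aug K f = 0 := Iff.rfl

/-- The element `t - 1` of the group ring, `t` a generator of `C`. -/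
noncomputable def tau : MonoidAlgebra K C :=
  MonoidAlgebra.of K C (Multiplicative.ofAdd 1) - 1

lemma aug_of (a : C) : aug K (MonoidAlgebra.of K C a) = 1 := by
  show (MonoidAlgebra.lift K K C) 1 (MonoidAlgebra.of K C a) = 1
  rw [MonoidAlgebra.lift_of, MonoidHom.one_apply]

lemma tau_mem : tau K ∈ augIdeal K := by
  rw [mem_augIdeal_iff, tau, map_sub, aug_of, map_one, sub_self]

lemma of_sub_one_mem (a : C) :
    MonoidAlgebra.of K C a - 1 ∈ Ideal.span {tau K} := by
  set J := Ideal.span {tau K} with hJ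
  have htau : tau K ∈ J := Ideal.subset_span rfl
  have main : ∀ z : ℤ, MonoidAlgebra.of K C (Multiplicative.ofAdd z) - 1 ∈ J := by
    intro z
    induction z using Int.induction_on with
    | zero =>
      rw [ofAdd_zero, map_one, sub_self]
      exact zero_mem J
    | succ n ih =>
      have hmul : MonoidAlgebra.of K C (Multiplicative.ofAdd ((n : ℤ) + 1)) =
          MonoidAlgebra.of K C (Multiplicative.ofAdd (n : ℤ)) *
            MonoidAlgebra.of K C (Multiplicative.ofAdd (1 : ℤ)) := by
        rw [← map_mul, ← ofAdd_add]
      have key : MonoidAlgebra.of K C (Multiplicative.ofAdd ((n : ℤ) + 1)) - 1 =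
          MonoidAlgebra.of K C (Multiplicative.ofAdd (n : ℤ)) * tau K +
            (MonoidAlgebra.of K C (Multiplicative.ofAdd (n : ℤ)) - 1) := by
        rw [hmul, tau]; ring
      rw [key]
      exact add_mem (Ideal.mul_mem_left _ _ htau) ih
    | pred n ih =>
      have hmul : MonoidAlgebra.of K C (Multiplicative.ofAdd (-(n : ℤ))) =
          MonoidAlgebra.of K C (Multiplicative.ofAdd (-(n : ℤ) - 1)) *
            MonoidAlgebra.of K C (Multiplicative.ofAdd (1 : ℤ)) := by
        rw [← map_mul, ← ofAdd_add]
        congr 1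
        ring
      have key : MonoidAlgebra.of K C (Multiplicative.ofAdd (-(n : ℤ) - 1)) - 1 =
          -(MonoidAlgebra.of K C (Multiplicative.ofAdd (-(n : ℤ) - 1)) * tau K) +
            (MonoidAlgebra.of K C (Multiplicative.ofAdd (-(n : ℤ))) - 1) := by
        rw [hmul, tau]; ring
      rw [key]
      exact add_mem (neg_mem (Ideal.mul_mem_left _ _ htau)) ih
  have := main (Multiplicative.toAdd a)
  rwa [ofAdd_toAdd] at this

lemma augIdeal_eq_span : augIdeal K = Ideal.span {tau K} := by
  set J := Ideal.span {tau K} with hJ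
  apply le_antisymm
  · intro f hf
    have hf0 : aug K f = 0 := (mem_augIdeal_iff K f).mp hf
    have key : ∀ g : MonoidAlgebra K C,
        g - algebraMap K (MonoidAlgebra K C) (aug K g) ∈ J := by
      intro g
      induction g using MonoidAlgebra.induction_on with
      | of a =>
        rw [aug_of, map_one]
        exact of_sub_one_mem K a
      | add u v hu hv =>
        have : (u + v) - algebraMap K (MonoidAlgebra K C) (aug K (u + v)) =
            (u - algebraMap K (MonoidAlgebra K C) (aug K u)) +
            (v - algebraMap K (MonoidAlgebra K C) (aug K v)) := by
          rw [map_add, map_add]; ring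
        rw [this]
        exact add_mem hu hv
      | smul r g hg =>
        have : r • g - algebraMap K (MonoidAlgebra K C) (aug K (r • g)) =
            algebraMap K (MonoidAlgebra K C) r *
              (g - algebraMap K (MonoidAlgebra K C) (aug K g)) := by
          simp only [map_smul, smul_eq_mul, map_mul, Algebra.smul_def, mul_sub,
            AlgHom.commutes, Algebra.algebraMap_self, RingHom.id_apply]
        rw [this]
        exact Ideal.mul_mem_left _ _ hg
    have := key f
    rwa [hf0, map_zero, sub_zero] at this
  · rw [Ideal.span_le, Set.singleton_subset_iff]
    exact tau_mem K

end AugIdeal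

/-- Let `K` be an Artinian commutative ring and `M` a `K[C]`-module that is
finitely generated over `K`.  Then (a) `C` acts nilpotently on the `I`-adic completion
`M̂_I` (i.e. `M̂_I · I^n = 0` for some `n`), (b) the natural map `M → M̂_I` is a split
surjection of `C`-modules (i.e. of `K[C]`-modules), and (c) `M ≅ MI^∞ ⊕ M̂_I`, where
`MI^∞ = ⋂ᵢ MI^i`. -/
theorem bousfield_stmt12 (K : Type) [CommRing K] [IsArtinianRing K]
    (M : Type) [AddCommGroup M] [Module (MonoidAlgebra K C) M]
    [Module K M] [IsScalarTower K (MonoidAlgebra K C) M] [Module.Finite K M] :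
    (∃ n : ℕ, (augIdeal K) ^ n •
        (⊤ : Submodule (MonoidAlgebra K C) (AdicCompletion (augIdeal K) M)) = ⊥) ∧
    (∃ s : AdicCompletion (augIdeal K) M →ₗ[MonoidAlgebra K C] M,
        (AdicCompletion.of (augIdeal K) M) ∘ₗ s = LinearMap.id) ∧
    Nonempty (M ≃ₗ[MonoidAlgebra K C]
        (↥(⨅ i : ℕ, (augIdeal K) ^ i • (⊤ : Submodule (MonoidAlgebra K C) M)) ×
          AdicCompletion (augIdeal K) M)) := by
  classical
  set I : Ideal (MonoidAlgebra K C) := augIdeal K with hI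
  haveI : IsArtinian K M := isArtinian_of_fg_of_artinian'
  haveI : IsNoetherian K M := aux_isNoetherian_of_finite_artinian M
  haveI : IsArtinian (MonoidAlgebra K C) M := isArtinian_of_tower K inferInstance
  haveI : IsNoetherian (MonoidAlgebra K C) M := isNoetherian_of_tower K inferInstance
  -- the endomorphism given by multiplication by `tau K = t - 1`
  let φ : Module.End (MonoidAlgebra K C) M := LinearMap.lsmul (MonoidAlgebra K C) M (tau K)
  have hφpow : ∀ (i : ℕ) (x : M), (φ ^ i) x = (tau K) ^ i • x := by
    intro i
    induction i with
    | zero => intro x; simp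
    | succ i ih =>
      intro x
      rw [pow_succ, Module.End.mul_apply]
      show (φ ^ i) ((tau K) • x) = (tau K) ^ (i + 1) • x
      rw [ih, ← mul_smul, ← pow_succ]
  have hIi : ∀ i : ℕ,
      (I ^ i • ⊤ : Submodule (MonoidAlgebra K C) M) = LinearMap.range (φ ^ i) := by
    intro i
    rw [hI, augIdeal_eq_span, Ideal.span_singleton_pow]
    apply le_antisymm
    · refine Submodule.smul_le.mpr fun r hr m _ => ?_
      obtain ⟨c, rfl⟩ := Ideal.mem_span_singleton.mp hr
      exact ⟨c • m, by rw [hφpow, smul_smul]⟩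
    · rintro x ⟨y, rfl⟩
      rw [hφpow]
      exact Submodule.smul_mem_smul (Ideal.mem_span_singleton_self _) trivial
  -- Fitting decomposition
  obtain ⟨n, hn⟩ := Filter.eventually_atTop.mp
    ((φ.eventually_isCompl_ker_pow_range_pow).and φ.eventually_iInf_range_pow_eq)
  obtain ⟨hc, hi⟩ := hn n le_rfl
  have hstab : ∀ m, n ≤ m → LinearMap.range (φ ^ m) = LinearMap.range (φ ^ n) := by
    intro m hm
    rw [← (hn m hm).2, hi]
  set K₀ := LinearMap.ker (φ ^ n) with hK₀
  set R₀ := LinearMap.range (φ ^ n) with hR₀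
  -- the kernel of the natural map to the completion
  have hker : LinearMap.ker (AdicCompletion.of I M) = R₀ := by
    ext x
    rw [LinearMap.mem_ker, ← hi]
    constructor
    · intro h
      rw [Submodule.mem_iInf]
      intro m
      have h0 : (AdicCompletion.of I M x).val m = 0 := by rw [h]; rfl
      rw [AdicCompletion.of_apply, Submodule.mkQ_apply, Submodule.Quotient.mk_eq_zero] at h0
      rw [← hIi]
      exact h0
    · intro h
      apply AdicCompletion.ext
      intro m
      show (AdicCompletion.of I M x).val m = (0 : AdicCompletion I M).val m
      rw [AdicCompletion.of_apply, AdicCompletion.val_zero, Pi.zero_apply, Submodule.mkQ_apply,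
        Submodule.Quotient.mk_eq_zero, hIi]
      exact (Submodule.mem_iInf _).mp h m
  -- surjectivity of the natural map to the completion
  have hsurj : Function.Surjective (AdicCompletion.of I M) := by
    intro f
    obtain ⟨x, hx⟩ := Submodule.Quotient.mk_surjective _ (f.val n)
    refine ⟨x, AdicCompletion.ext fun i => ?_⟩
    rcases le_total i n with h | h
    · calc (AdicCompletion.of I M x).val i
          = AdicCompletion.transitionMap I M h ((AdicCompletion.of I M x).val n) :=
            ((AdicCompletion.of I M x).2 h).symm
        _ = AdicCompletion.transitionMap I M h (f.val n) := by
            rw [AdicCompletion.of_apply, Submodule.mkQ_apply, hx]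
        _ = f.val i := f.2 h
    · obtain ⟨y, hy⟩ := Submodule.Quotient.mk_surjective _ (f.val i)
      have h1 : (Submodule.Quotient.mk y : M ⧸ (I ^ n • ⊤ : Submodule _ M)) = f.val n := by
        rw [← f.2 h, ← hy]; rfl
      have h2 : x - y ∈ (I ^ n • ⊤ : Submodule (MonoidAlgebra K C) M) :=
        (Submodule.Quotient.eq _).mp (hx.trans h1.symm)
      have h3 : x - y ∈ (I ^ i • ⊤ : Submodule (MonoidAlgebra K C) M) := by
        rw [hIi] at h2 ⊢
        rw [hstab i h]
        exact h2
      show (AdicCompletion.of I M x).val i = f.val i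
      rw [AdicCompletion.of_apply, Submodule.mkQ_apply, ← hy]
      exact (Submodule.Quotient.eq _).mpr h3
  -- part (a)
  have parta : I ^ n • (⊤ : Submodule (MonoidAlgebra K C) (AdicCompletion I M)) = ⊥ := by
    have htop : (⊤ : Submodule (MonoidAlgebra K C) (AdicCompletion I M)) =
        Submodule.map (AdicCompletion.of I M) ⊤ := by
      rw [Submodule.map_top, LinearMap.range_eq_top.mpr hsurj]
    rw [htop, ← Submodule.map_smul'', hIi n, ← hR₀, ← hker]
    apply eq_bot_iff.mpr
    rintro x ⟨y, hy, rfl⟩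
    rw [Submodule.mem_bot]
    exact hy
  -- the restriction of `of` to `K₀` is bijective
  let ofK : K₀ →ₗ[MonoidAlgebra K C] AdicCompletion I M :=
    (AdicCompletion.of I M) ∘ₗ K₀.subtype
  have hinj : Function.Injective ofK := by
    rw [← LinearMap.ker_eq_bot]
    apply eq_bot_iff.mpr
    rintro ⟨x, hx⟩ hmem
    have hx' : x ∈ R₀ := by
      rw [← hker]
      exact hmem
    have : x ∈ K₀ ⊓ R₀ := ⟨hx, hx'⟩
    rw [disjoint_iff.mp hc.disjoint] at this
    exact Submodule.mem_bot _ |>.mpr (Subtype.ext (Submodule.mem_bot _ |>.mp this))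
  have hsurjK : Function.Surjective ofK := by
    intro f
    obtain ⟨x, rfl⟩ := hsurj f
    have hx : x ∈ K₀ ⊔ R₀ := by
      rw [codisjoint_iff.mp hc.codisjoint]
      trivial
    obtain ⟨k, hk, r, hr, rfl⟩ := Submodule.mem_sup.mp hx
    refine ⟨⟨k, hk⟩, ?_⟩
    show AdicCompletion.of I M k = AdicCompletion.of I M (k + r)
    have hr0 : AdicCompletion.of I M r = 0 := by
      rw [← LinearMap.mem_ker, hker]; exact hr
    rw [map_add, hr0, add_zero]
  let e : K₀ ≃ₗ[MonoidAlgebra K C] AdicCompletion I M :=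
    LinearEquiv.ofBijective ofK ⟨hinj, hsurjK⟩
  refine ⟨⟨n, parta⟩, ⟨K₀.subtype ∘ₗ e.symm.toLinearMap, ?_⟩, ⟨?_⟩⟩
  · apply LinearMap.ext
    intro f
    show AdicCompletion.of I M (K₀.subtype (e.symm f)) = f
    have : AdicCompletion.of I M (K₀.subtype (e.symm f)) = e (e.symm f) := rfl
    rw [this, e.apply_symm_apply]
  · have hiInf : (⨅ i : ℕ, I ^ i • (⊤ : Submodule (MonoidAlgebra K C) M)) = R₀ := by
      simp_rw [hIi]
      exact hi
    exact (Submodule.prodEquivOfIsCompl K₀ R₀ hc).symm.trans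
      ((LinearEquiv.prodComm (MonoidAlgebra K C) ↥K₀ ↥R₀).trans
        (LinearEquiv.prodCongr (LinearEquiv.ofEq _ _ hiInf.symm) e))
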